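/- At every point of U where F⁵ = 0, A ≠ 0 and B ≠ 0, the two effective formulas (4.8) and (4.14) for the parameters φ₁, φ₂ agree: −3·A·(A·S − B_{0.1})/(5·B²) − 3·(A_{0.1} + B_{1.0} − 3·A·R)/(5·B) − (6/5)·Q = −3·(B·P + A_{1.0})/(5·A) + (3/5)·Q, and 3·(A·S − B_{0.1})/(5·B) − (3/5)·R = 3·B·(B·P + A_{1.0})/(5·A²) − 3·(B_{1.0} + A_{0.1} + 3·B·Q)/(5·A) + (6/5)·R. -/

import Mathlib

noncomputable section

open Real

/-- Partial derivative in the first argument (`f_{1.0}`). -/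
def pdx (f : ℝ → ℝ → ℝ) : ℝ → ℝ → ℝ := fun x y => deriv (fun t => f t y) x

/-- Partial derivative in the second argument (`f_{0.1}`). -/
def pdy (f : ℝ → ℝ → ℝ) : ℝ → ℝ → ℝ := fun x y => deriv (fun t => f x t) y

/-- Indexed partial derivative: `0 ↦ ∂/∂x`, `1 ↦ ∂/∂y`. -/
def pd (i : Fin 2) (f : ℝ → ℝ → ℝ) : ℝ → ℝ → ℝ := if i = 0 then pdx f else pdy f

/-- Smoothness of a two-variable real function on a set `U ⊆ ℝ²`. -/
def Smooth2 (U : Set (ℝ × ℝ)) (f : ℝ → ℝ → ℝ) : Prop :=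
  ContDiffOn ℝ (⊤ : ℕ∞) (Function.uncurry f) U

/-- The quantity `A` of formula (1.6). -/
def coefA (P Q R S : ℝ → ℝ → ℝ) : ℝ → ℝ → ℝ := fun x y =>
  pdy (pdy P) x y - 2 * pdx (pdy Q) x y + pdx (pdx R) x y
    + 2 * P x y * pdx S x y + S x y * pdx P x y
    - 3 * P x y * pdy R x y - 3 * R x y * pdy P x y
    - 3 * Q x y * pdx R x y + 6 * Q x y * pdy Q x y

/-- The quantity `B` of formula (1.6). -/
def coefB (P Q R S : ℝ → ℝ → ℝ) : ℝ → ℝ → ℝ := fun x y =>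
  pdx (pdx S) x y - 2 * pdx (pdy R) x y + pdy (pdy Q) x y
    - 2 * S x y * pdy P x y - P x y * pdy S x y
    + 3 * S x y * pdx Q x y + 3 * Q x y * pdx S x y
    + 3 * R x y * pdy Q x y - 6 * R x y * pdx R x y

/-- The quantity `G` of formula (2.4). -/
def coefG (P Q R S : ℝ → ℝ → ℝ) : ℝ → ℝ → ℝ := fun x y =>
  -(coefB P Q R S x y) * pdx (coefB P Q R S) x y
    - 3 * coefA P Q R S x y * pdy (coefB P Q R S) x y
    + 4 * coefB P Q R S x y * pdy (coefA P Q R S) x y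
    + 3 * S x y * (coefA P Q R S x y)^2
    - 6 * R x y * coefA P Q R S x y * coefB P Q R S x y
    + 3 * Q x y * (coefB P Q R S x y)^2

/-- The quantity `H` of formula (2.4). -/
def coefH (P Q R S : ℝ → ℝ → ℝ) : ℝ → ℝ → ℝ := fun x y =>
  -(coefA P Q R S x y) * pdy (coefA P Q R S) x y
    - 3 * coefB P Q R S x y * pdx (coefA P Q R S) x y
    + 4 * coefA P Q R S x y * pdx (coefB P Q R S) x y
    - 3 * P x y * (coefB P Q R S x y)^2
    + 6 * Q x y * coefA P Q R S x y * coefB P Q R S x y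
    - 3 * R x y * (coefA P Q R S x y)^2

/-- The quantity `F⁵` of formula (2.2). -/
def coefF5 (P Q R S : ℝ → ℝ → ℝ) : ℝ → ℝ → ℝ := fun x y =>
  coefA P Q R S x y * coefB P Q R S x y * pdy (coefA P Q R S) x y
    + coefA P Q R S x y * coefB P Q R S x y * pdx (coefB P Q R S) x y
    - (coefA P Q R S x y)^2 * pdy (coefB P Q R S) x y
    - (coefB P Q R S x y)^2 * pdx (coefA P Q R S) x y
    - P x y * (coefB P Q R S x y)^3
    + 3 * Q x y * coefA P Q R S x y * (coefB P Q R S x y)^2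
    - 3 * R x y * (coefA P Q R S x y)^2 * coefB P Q R S x y
    + S x y * (coefA P Q R S x y)^3

/-- The effective formulas (4.8) and (4.14) for `φ₁`, `φ₂` agree where `F⁵ = 0`,
`A ≠ 0` and `B ≠ 0`. -/
theorem phi_formulas_agree
    (U : Set (ℝ × ℝ)) (hU : IsOpen U) (hUconn : IsConnected U)
    (P Q R S : ℝ → ℝ → ℝ)
    (hP : Smooth2 U P) (hQ : Smooth2 U Q) (hR : Smooth2 U R) (hS : Smooth2 U S) :
    ∀ x y : ℝ, (x, y) ∈ U →
      coefF5 P Q R S x y = 0 →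
      coefA P Q R S x y ≠ 0 →
      coefB P Q R S x y ≠ 0 →
      (-3 * coefA P Q R S x y *
          (coefA P Q R S x y * S x y - pdy (coefB P Q R S) x y)
          / (5 * (coefB P Q R S x y)^2)
        - 3 * (pdy (coefA P Q R S) x y + pdx (coefB P Q R S) x y
            - 3 * coefA P Q R S x y * R x y) / (5 * coefB P Q R S x y)
        - (6/5) * Q x y
        = -3 * (coefB P Q R S x y * P x y + pdx (coefA P Q R S) x y)
            / (5 * coefA P Q R S x y)
          + (3/5) * Q x y) ∧
      (3 * (coefA P Q R S x y * S x y - pdy (coefB P Q R S) x y)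
            / (5 * coefB P Q R S x y)
        - (3/5) * R x y
        = 3 * coefB P Q R S x y *
            (coefB P Q R S x y * P x y + pdx (coefA P Q R S) x y)
            / (5 * (coefA P Q R S x y)^2)
          - 3 * (pdx (coefB P Q R S) x y + pdy (coefA P Q R S) x y
              + 3 * coefB P Q R S x y * Q x y) / (5 * coefA P Q R S x y)
          + (6/5) * R x y) := by
  intro x y _ hF5 hA hB
  set a := coefA P Q R S x y with ha
  set b := coefB P Q R S x y with hb
  set a1 := pdx (coefA P Q R S) x y
  set a2 := pdy (coefA P Q R S) x y
  set b1 := pdx (coefB P Q R S) x y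
  set b2 := pdy (coefB P Q R S) x y
  have hF : a * b * a2 + a * b * b1 - a^2 * b2 - b^2 * a1
      - P x y * b^3 + 3 * Q x y * a * b^2 - 3 * R x y * a^2 * b
      + S x y * a^3 = 0 := hF5
  constructor
  · field_simp
    linear_combination (-3) * hF
  · field_simp
    linear_combination 3 * hF
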